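/- arXiv:2410.21097 — 10 statements merged into one kernel-verified Lean document; each statement's English description precedes it below -/
import Mathlib

section
/- For a nonexpansive self-map T of a metric space (X,d), the limit lim_{k→∞} d(T^k x, x)/k exists, and its value is independent of the choice of x ∈ X. -/
/-- For a nonexpansive self-map `T` of a metric space `(X,d)`,
the limit `lim_k d(T^k x, x)/k` exists and is independent of `x`. -/
theorem escape_rate_exists_and_independent {X : Type*} [MetricSpace X] [Nonempty X]
    (T : X → X) (hT : ∀ x y : X, dist (T x) (T y) ≤ dist x y) :
    ∃ ρ : ℝ, ∀ x : X,
      Filter.Tendsto (fun k : ℕ => dist (T^[k] x) x / (k : ℝ)) Filter.atTop (nhds ρ) := by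
  have hiter : ∀ (k : ℕ) (a b : X), dist (T^[k] a) (T^[k] b) ≤ dist a b := by
    intro k
    induction k with
    | zero => simp
    | succ n ih =>
      intro a b
      simpa [Function.iterate_succ_apply'] using (hT _ _).trans (ih a b)
  obtain ⟨x0⟩ := ‹Nonempty X›
  set u : ℕ → ℝ := fun n => dist (T^[n] x0) x0 with hu
  have hsub : Subadditive u := by
    intro m n
    calc dist (T^[m+n] x0) x0 ≤ dist (T^[m+n] x0) (T^[n] x0) + dist (T^[n] x0) x0 :=
          dist_triangle _ _ _
      _ ≤ dist (T^[m] x0) x0 + dist (T^[n] x0) x0 := by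
          rw [add_comm m n, Function.iterate_add_apply]
          exact add_le_add_left (hiter n _ _) _
  have hbdd : BddBelow (Set.range fun n => u n / n) := by
    refine ⟨0, ?_⟩
    rintro r ⟨n, rfl⟩
    exact div_nonneg dist_nonneg (Nat.cast_nonneg n)
  refine ⟨hsub.lim, fun x => ?_⟩
  have hlim := hsub.tendsto_lim hbdd
  have hdiff : Filter.Tendsto (fun k : ℕ => (dist (T^[k] x) x - u k) / (k : ℝ))
      Filter.atTop (nhds 0) := by
    have key : ∀ (a b : X) (k : ℕ), dist (T^[k] a) a ≤ dist (T^[k] b) b + 2 * dist a b := by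
      intro a b k
      have h4 := dist_triangle4 (T^[k] a) (T^[k] b) b a
      have h1 := hiter k a b
      have h2 := dist_comm b a
      linarith
    have hb : ∀ k : ℕ, ‖(dist (T^[k] x) x - u k) / (k : ℝ)‖ ≤ 2 * dist x x0 / (k : ℝ) := by
      intro k
      rw [norm_div, Real.norm_natCast]
      gcongr
      rw [Real.norm_eq_abs, abs_sub_le_iff]
      have h1 := key x x0 k
      have h2 := key x0 x k
      have h3 := dist_comm x x0
      constructor <;> simp only [hu] <;> linarith
    exact squeeze_zero_norm hb (tendsto_const_div_atTop_nhds_zero_nat _)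
  have := hlim.add hdiff
  simpa using this.congr (fun k => by ring)
end

section
/- Let C ⊂ ℝⁿ be a proper cone. A self-map T of the interior of C is nonexpansive in the Funk hemi-metric (Funk(T(x),T(y)) ≤ Funk(x,y) for all x,y ∈ int C) if and only if T is order preserving (x ≤_C y implies T(x) ≤_C T(y) on int C) and positively homogeneous of degree 1 (T(αx) = αT(x) for all α > 0). -/
/-- The Funk hemi-metric of a cone `C`: `Funk(x,y) = log inf {α > 0 | x ≤_C α y}`. -/
noncomputable def funkMetric {n : ℕ} (C : Set (Fin n → ℝ)) (x y : Fin n → ℝ) : ℝ :=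
  Real.log (sInf {α : ℝ | 0 < α ∧ α • y - x ∈ C})

/-- A self-map `T` of the interior of a proper cone `C ⊂ ℝⁿ` is
nonexpansive in the Funk hemi-metric iff it is order preserving and positively
homogeneous of degree 1. -/
theorem funk_nonexpansive_iff_orderPreserving_homogeneous {n : ℕ} (C : Set (Fin n → ℝ))
    (hclosed : IsClosed C) (hconv : Convex ℝ C)
    (hcone : ∀ x ∈ C, ∀ t : ℝ, 0 ≤ t → t • x ∈ C)
    (hpointed : ∀ x : Fin n → ℝ, x ∈ C → -x ∈ C → x = 0)
    (hint : (interior C).Nonempty)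
    (T : (Fin n → ℝ) → (Fin n → ℝ))
    (hmaps : Set.MapsTo T (interior C) (interior C)) :
    (∀ x ∈ interior C, ∀ y ∈ interior C, funkMetric C (T x) (T y) ≤ funkMetric C x y) ↔
      ((∀ x ∈ interior C, ∀ y ∈ interior C, y - x ∈ C → T y - T x ∈ C) ∧
        (∀ α : ℝ, 0 < α → ∀ x ∈ interior C, T (α • x) = α • T x)) := by
  classical
  rcases Nat.eq_zero_or_pos n with hn | hn
  · subst hn
    have h0C : (0 : Fin 0 → ℝ) ∈ C := by
      obtain ⟨z, hz⟩ := hint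
      have hzC := interior_subset hz
      rwa [Subsingleton.elim z 0] at hzC
    constructor
    · intro _
      refine ⟨fun x _ y _ _ => ?_, fun α _ x _ => Subsingleton.elim _ _⟩
      rw [Subsingleton.elim (T y - T x) 0]; exact h0C
    · intro _ x _ y _
      exact le_of_eq (by congr 1 <;> exact Subsingleton.elim _ _)
  -- main case : n ≥ 1
  have h0C : (0 : Fin n → ℝ) ∈ C := by
    obtain ⟨z, hz⟩ := hint
    simpa using hcone z (interior_subset hz) 0 le_rfl
  have haddC : ∀ u ∈ C, ∀ v ∈ C, u + v ∈ C := by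
    intro u hu v hv
    have h2 : ((1:ℝ)/2) • u + ((1:ℝ)/2) • v ∈ C :=
      hconv hu hv (by norm_num) (by norm_num) (by norm_num)
    have := hcone _ h2 2 (by norm_num)
    simpa [smul_add, smul_smul] using this
  have hne0 : ∀ x ∈ interior C, x ≠ 0 := by
    intro x hx hx0
    subst hx0
    obtain ⟨ε, hε, hball⟩ := Metric.isOpen_iff.mp isOpen_interior 0 hx
    have hall : ∀ v : Fin n → ℝ, v ∈ C := by
      intro v
      rcases eq_or_ne v 0 with rfl | hv
      · exact h0C
      have hnv : (0:ℝ) < ‖v‖ := norm_pos_iff.mpr hv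
      have hw : (ε / (2 * ‖v‖)) • v ∈ C := by
        refine interior_subset (hball ?_)
        have : dist ((ε / (2 * ‖v‖)) • v) 0 = (ε / (2 * ‖v‖)) * ‖v‖ := by
          rw [dist_zero_right, norm_smul, Real.norm_eq_abs,
            abs_of_pos (by positivity)]
        have heq : ε / (2 * ‖v‖) * ‖v‖ = ε / 2 := by
          field_simp
        rw [Metric.mem_ball, this, heq]
        linarith
      have := hcone _ hw (2 * ‖v‖ / ε) (by positivity)
      rwa [smul_smul, div_mul_div_comm, mul_comm ε, div_self (by positivity),
        one_smul] at this
    have hv1 := hpointed (fun _ => (1:ℝ)) (hall _) (hall _)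
    have := congrFun hv1 ⟨0, hn⟩
    norm_num at this
  have hsmul_int : ∀ α : ℝ, 0 < α → ∀ x ∈ interior C, α • x ∈ interior C := by
    intro α hα x hx
    have hopen : IsOpen ((fun z => α • z) '' interior C) :=
      isOpenMap_smul₀ hα.ne' _ isOpen_interior
    have hsub : ((fun z => α • z) '' interior C) ⊆ C := by
      rintro _ ⟨z, hz, rfl⟩
      exact hcone z (interior_subset hz) α hα.le
    exact interior_maximal hsub hopen ⟨x, hx, rfl⟩
  have hbdd : ∀ x y : Fin n → ℝ, BddBelow {α : ℝ | 0 < α ∧ α • y - x ∈ C} :=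
    fun x y => ⟨0, fun a ha => ha.1.le⟩
  have hSne : ∀ x : Fin n → ℝ, ∀ y ∈ interior C,
      {α : ℝ | 0 < α ∧ α • y - x ∈ C}.Nonempty := by
    intro x y hy
    obtain ⟨ε, hε, hball⟩ := Metric.isOpen_iff.mp isOpen_interior y hy
    set δ : ℝ := ε / (2 * (‖x‖ + 1)) with hδdef
    have hδ : 0 < δ := by positivity
    have hyx : y - δ • x ∈ C := by
      refine interior_subset (hball ?_)
      rw [Metric.mem_ball, dist_eq_norm]
      have : y - δ • x - y = -(δ • x) := by abel
      rw [this, norm_neg, norm_smul, Real.norm_eq_abs, abs_of_pos hδ]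
      calc δ * ‖x‖ ≤ δ * (‖x‖ + 1) := by nlinarith [norm_nonneg x]
        _ = ε / 2 := by rw [hδdef]; field_simp
        _ < ε := by linarith
    refine ⟨δ⁻¹, inv_pos.mpr hδ, ?_⟩
    have := hcone _ hyx δ⁻¹ (inv_pos.mpr hδ).le
    rwa [smul_sub, smul_smul, inv_mul_cancel₀ hδ.ne', one_smul] at this
  -- the infimum is positive and attained
  have hkey : ∀ x ∈ interior C, ∀ y ∈ interior C,
      0 < sInf {α : ℝ | 0 < α ∧ α • y - x ∈ C} ∧
        (sInf {α : ℝ | 0 < α ∧ α • y - x ∈ C}) • y - x ∈ C := by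
    intro x hx y hy
    set S := {α : ℝ | 0 < α ∧ α • y - x ∈ C} with hS
    set m := sInf S with hm
    have hmem : m • y - x ∈ C := by
      have hA : IsClosed {α : ℝ | α • y - x ∈ C} :=
        hclosed.preimage (by continuity)
      have hsub : S ⊆ {α : ℝ | α • y - x ∈ C} := fun a ha => ha.2
      have hmc : m ∈ closure S := csInf_mem_closure (hSne x y hy) (hbdd x y)
      exact hA.closure_subset_iff.mpr hsub hmc
    have hm0 : 0 ≤ m := le_csInf (hSne x y hy) (fun a ha => ha.1.le)
    have hmpos : 0 < m := by
      rcases hm0.lt_or_eq with h | h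
      · exact h
      · exfalso
        rw [← h] at hmem
        rw [zero_smul, zero_sub] at hmem
        exact hne0 x hx (hpointed x (interior_subset hx) hmem)
    exact ⟨hmpos, hmem⟩
  -- upward closedness: m ≤ β → β • y - x ∈ C
  have hup : ∀ x ∈ interior C, ∀ y ∈ interior C, ∀ β : ℝ,
      sInf {α : ℝ | 0 < α ∧ α • y - x ∈ C} ≤ β → β • y - x ∈ C := by
    intro x hx y hy β hβ
    obtain ⟨hmpos, hmem⟩ := hkey x hx y hy
    have h2 : (β - sInf {α : ℝ | 0 < α ∧ α • y - x ∈ C}) • y ∈ C :=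
      hcone y (interior_subset hy) _ (sub_nonneg.mpr hβ)
    have := haddC _ hmem _ h2
    have heq : sInf {α : ℝ | 0 < α ∧ α • y - x ∈ C} • y - x +
        (β - sInf {α : ℝ | 0 < α ∧ α • y - x ∈ C}) • y = β • y - x := by
      rw [sub_smul]; abel
    rwa [heq] at this
  have hdown : ∀ x y : Fin n → ℝ, ∀ β : ℝ, 0 < β → β • y - x ∈ C →
      sInf {α : ℝ | 0 < α ∧ α • y - x ∈ C} ≤ β :=
    fun x y β hβ hmem => csInf_le (hbdd x y) ⟨hβ, hmem⟩
  -- transfer: funk ≤ log β ↔ sInf ≤ β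
  have hlog : ∀ x ∈ interior C, ∀ y ∈ interior C, ∀ β : ℝ, 0 < β →
      (funkMetric C x y ≤ Real.log β ↔
        sInf {α : ℝ | 0 < α ∧ α • y - x ∈ C} ≤ β) := by
    intro x hx y hy β hβ
    exact Real.log_le_log_iff (hkey x hx y hy).1 hβ
  constructor
  · intro hexp
    constructor
    · intro x hx y hy hsub
      have h1 : funkMetric C x y ≤ Real.log 1 := by
        rw [hlog x hx y hy 1 one_pos]
        exact hdown x y 1 one_pos (by simpa using hsub)
      have h2 : funkMetric C (T x) (T y) ≤ Real.log 1 :=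
        le_trans (hexp x hx y hy) h1
      rw [hlog (T x) (hmaps hx) (T y) (hmaps hy) 1 one_pos] at h2
      simpa using hup (T x) (hmaps hx) (T y) (hmaps hy) 1 h2
    · intro α hα x hx
      have hax : α • x ∈ interior C := hsmul_int α hα x hx
      have hTx := hmaps hx
      have hTax := hmaps hax
      -- funk x (α•x) ≤ log α⁻¹
      have h1 : funkMetric C x (α • x) ≤ Real.log α⁻¹ := by
        rw [hlog x hx (α • x) hax α⁻¹ (inv_pos.mpr hα)]
        refine hdown x (α • x) α⁻¹ (inv_pos.mpr hα) ?_
        rw [smul_smul, inv_mul_cancel₀ hα.ne', one_smul, sub_self]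
        exact h0C
      have h2 : funkMetric C (α • x) x ≤ Real.log α := by
        rw [hlog (α • x) hax x hx α hα]
        refine hdown (α • x) x α hα ?_
        rw [sub_self]; exact h0C
      have h1' : α⁻¹ • T (α • x) - T x ∈ C := by
        have := le_trans (hexp x hx (α • x) hax) h1
        rw [hlog (T x) hTx (T (α • x)) hTax α⁻¹ (inv_pos.mpr hα)] at this
        exact hup (T x) hTx (T (α • x)) hTax α⁻¹ this
      have h2' : α • T x - T (α • x) ∈ C := by
        have := le_trans (hexp (α • x) hax x hx) h2
        rw [hlog (T (α • x)) hTax (T x) hTx α hα] at this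
        exact hup (T (α • x)) hTax (T x) hTx α this
      have h1'' : T (α • x) - α • T x ∈ C := by
        have := hcone _ h1' α hα.le
        rwa [smul_sub, smul_smul, mul_inv_cancel₀ hα.ne', one_smul] at this
      have := hpointed _ h1'' (by rwa [neg_sub])
      rw [sub_eq_zero] at this
      exact this
  · rintro ⟨hmono, hhom⟩ x hx y hy
    obtain ⟨hmpos, hmem⟩ := hkey x hx y hy
    set m := sInf {α : ℝ | 0 < α ∧ α • y - x ∈ C} with hm
    have hmy : m • y ∈ interior C := hsmul_int m hmpos y hy
    have hT : T (m • y) - T x ∈ C := hmono x hx (m • y) hmy hmem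
    rw [hhom m hmpos y hy] at hT
    have hle : sInf {α : ℝ | 0 < α ∧ α • T y - T x ∈ C} ≤ m :=
      hdown (T x) (T y) m hmpos hT
    rw [funkMetric] at *
    exact Real.log_le_log_iff (hkey (T x) (hmaps hx) (T y) (hmaps hy)).1 hmpos
      |>.mpr hle |>.trans (le_of_eq rfl)
end

section
/- For invertible matrices a₁,b₁,…,a_k,b_k in GL_n(ℂ), define T_{ab}(x) = b* a* x a b on positive definite Hermitian matrices. Then Funk(T_{a_k b_k} ∘ ⋯ ∘ T_{a₁ b₁}(I), I) = 2 log ‖a₁ b₁ ⋯ a_k b_k‖, where ‖·‖ is the spectral norm and Funk(x,y) = log λ_max(x y⁻¹) on the cone of positive definite Hermitian matrices. -/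
open Matrix

/-- The maximal (real) eigenvalue of a complex matrix (well defined for matrices with
real spectrum, such as products of a positive definite matrix by the inverse of one). -/
noncomputable def lamMax {n : ℕ} (m : Matrix (Fin n) (Fin n) ℂ) : ℝ :=
  sSup {r : ℝ | ∃ v : Fin n → ℂ, v ≠ 0 ∧ m.mulVec v = r • v}

set_option maxHeartbeats 1000000 in
set_option synthInstance.maxHeartbeats 200000 in
/-- For invertible matrices `a₁,b₁,…,a_k,b_k ∈ GL_n(ℂ)` and the congruence
operators `T_{ab}(x) = bᴴ aᴴ x a b` on positive definite Hermitian matrices, the state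
`X k = T_{a_k b_k} ∘ ⋯ ∘ T_{a₁ b₁}(I)` and the product `P k = a₁ b₁ ⋯ a_k b_k` satisfy
`Funk(X k, I) = 2 log ‖P k‖`, where `Funk(x,y) = log λ_max (x y⁻¹)` and `‖·‖` is the
spectral norm (operator norm on Euclidean space). -/
theorem funk_congruence_eq_two_log_spectralNorm (n k : ℕ)
    (a b : Fin k → Matrix (Fin n) (Fin n) ℂ)
    (ha : ∀ i, IsUnit (a i)) (hb : ∀ i, IsUnit (b i))
    (X P : ℕ → Matrix (Fin n) (Fin n) ℂ)
    (hX0 : X 0 = 1)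
    (hXs : ∀ i : Fin k, X ((i : ℕ) + 1) = (b i)ᴴ * (a i)ᴴ * X (i : ℕ) * a i * b i)
    (hP0 : P 0 = 1)
    (hPs : ∀ i : Fin k, P ((i : ℕ) + 1) = P (i : ℕ) * a i * b i) :
    Real.log (lamMax (X k * (1 : Matrix (Fin n) (Fin n) ℂ)⁻¹)) =
      2 * Real.log ‖Matrix.toEuclideanCLM (𝕜 := ℂ) (P k)‖ := by
  -- First, `X m = (P m)ᴴ * P m` for all `m ≤ k`.
  have key : ∀ m, m ≤ k → X m = (P m)ᴴ * P m := by
    intro m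
    induction m with
    | zero => intro _; simp [hX0, hP0]
    | succ i ih =>
      intro him
      have hik : i < k := him
      have h1 := hXs ⟨i, hik⟩
      have h2 := hPs ⟨i, hik⟩
      simp only [] at h1 h2
      rw [h1, h2, ih (le_of_lt hik)]
      simp [Matrix.conjTranspose_mul, Matrix.mul_assoc]
  rw [inv_one, mul_one, key k le_rfl]
  set A := P k with hA
  rcases Nat.eq_zero_or_pos n with hn | hn
  · subst hn
    have hset : {r : ℝ | ∃ v : Fin 0 → ℂ, v ≠ 0 ∧ (Aᴴ * A).mulVec v = r • v} = ∅ := by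
      ext r
      simp only [Set.mem_setOf_eq, Set.mem_empty_iff_false, iff_false, not_exists]
      intro v
      have hv : v = 0 := funext fun i => i.elim0
      simp [hv]
    have h0 : lamMax (Aᴴ * A) = 0 := by rw [lamMax, hset, Real.sSup_empty]
    have hT0 : Matrix.toEuclideanCLM (𝕜 := ℂ) A = 0 :=
      ContinuousLinearMap.ext fun x => Subsingleton.elim _ _
    rw [h0, hT0]
    simp
  · set T := Matrix.toEuclideanCLM (𝕜 := ℂ) A with hT
    have hST : Matrix.toEuclideanCLM (𝕜 := ℂ) (Aᴴ * A) = star T * T := by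
      rw [_root_.map_mul, ← Matrix.star_eq_conjTranspose, map_star]
    -- eigenvalues of `Aᴴ * A` are the spectrum
    have hspec : ∀ μ : ℂ, μ ∈ spectrum ℂ (Aᴴ * A) ↔
        ∃ v : Fin n → ℂ, v ≠ 0 ∧ (Aᴴ * A).mulVec v = μ • v := by
      intro μ
      rw [← AlgEquiv.spectrum_eq
        (Matrix.toLinAlgEquiv' : Matrix (Fin n) (Fin n) ℂ ≃ₐ[ℂ] _) (Aᴴ * A),
        ← Module.End.hasEigenvalue_iff_mem_spectrum]
      constructor
      · intro h
        obtain ⟨v, hv⟩ := h.exists_hasEigenvector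
        exact ⟨v, hv.2, by simpa [Matrix.toLinAlgEquiv'_apply] using hv.apply_eq_smul⟩
      · rintro ⟨v, hv0, hv⟩
        exact Module.End.hasEigenvalue_of_hasEigenvector
          ⟨Module.End.mem_eigenspace_iff.2
            (by simpa [Matrix.toLinAlgEquiv'_apply] using hv), hv0⟩
    have hsets : {r : ℝ | ∃ v : Fin n → ℂ, v ≠ 0 ∧ (Aᴴ * A).mulVec v = r • v}
        = spectrum ℝ (star T * T) := by
      ext r
      have h1 : r ∈ spectrum ℝ (star T * T) ↔ (r : ℂ) ∈ spectrum ℂ (star T * T) := by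
        rw [← spectrum.algebraMap_mem_iff ℂ (a := star T * T) (r := r)]
        norm_num
      have h2 : spectrum ℂ (star T * T) = spectrum ℂ (Aᴴ * A) := by
        rw [← hST]
        exact AlgEquiv.spectrum_eq (Matrix.toEuclideanCLM (𝕜 := ℂ)) (Aᴴ * A)
      rw [Set.mem_setOf_eq, h1, h2, hspec]
      have hsm : ∀ v : Fin n → ℂ, (r : ℂ) • v = r • v := fun v => by
        rw [← algebraMap_smul ℂ r v, Complex.coe_algebraMap]
      simp_rw [hsm]
    haveI : Nontrivial (EuclideanSpace ℂ (Fin n)) := by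
      haveI : Nonempty (Fin n) := ⟨⟨0, hn⟩⟩
      infer_instance
    haveI : Nontrivial (EuclideanSpace ℂ (Fin n) →L[ℂ] EuclideanSpace ℂ (Fin n)) := by
      obtain ⟨x, hx⟩ := exists_ne (0 : EuclideanSpace ℂ (Fin n))
      exact ⟨1, 0, fun h => hx (by simpa using DFunLike.congr_fun h x)⟩
    have hpos : (0 : EuclideanSpace ℂ (Fin n) →L[ℂ] EuclideanSpace ℂ (Fin n)) ≤ star T * T :=
      star_mul_self_nonneg T
    have hmem : ‖star T * T‖ ∈ spectrum ℝ (star T * T) :=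
      CStarAlgebra.norm_mem_spectrum_of_nonneg hpos
    have hub : ∀ x ∈ spectrum ℝ (star T * T), x ≤ ‖star T * T‖ := fun x hx =>
      (Real.le_norm_self x).trans (spectrum.norm_le_norm_of_mem hx)
    have hlam : lamMax (Aᴴ * A) = ‖star T * T‖ := by
      rw [lamMax, hsets]
      exact le_antisymm (csSup_le ⟨_, hmem⟩ hub) (le_csSup ⟨_, hub⟩ hmem)
    clear_value A T
    have hnorm : ‖star T * T‖ = ‖T‖ * ‖T‖ :=
      CStarRing.norm_star_mul_self
        (E := EuclideanSpace ℂ (Fin n) →L[ℂ] EuclideanSpace ℂ (Fin n)) (x := T)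
    rw [hlam, hnorm, ← sq, Real.log_pow]
    norm_num
end

section
/- Let S be an order-preserving self-map of Lip₁ (1-Lipschitz functions from a hemi-metric space (X,d) to (ℝ,δ₁)) that commutes with addition of constants, and suppose there exists v ∈ Lip₁ and λ ∈ ℝ with λ + v ≤ Sv pointwise. Then for every x₀ ∈ X, lim_k [S^k d(·,x₀)](x₀)/k ≥ λ. -/
/-- Under the same setting as before, if some `v ∈ Lip₁` satisfies
`λ + v ≤ S v`, then the escape rate `lim_k (S^k d(·,x₀))(x₀)/k` is at least `λ`. -/
theorem subeigenvector_lower_bound {X : Type*} (d : X → X → ℝ)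
    (htri : ∀ x y z : X, d x z ≤ d x y + d y z)
    (hsep : ∀ x y : X, (d x y = 0 ∧ d y x = 0) ↔ x = y)
    (x₀ : X) (S : (X → ℝ) → (X → ℝ))
    (hlip : ∀ v : X → ℝ, (∀ x y : X, v x - v y ≤ d x y) →
      ∀ x y : X, S v x - S v y ≤ d x y)
    (hmono : ∀ v w : X → ℝ, (∀ x y : X, v x - v y ≤ d x y) →
      (∀ x y : X, w x - w y ≤ d x y) → (∀ x : X, v x ≤ w x) → ∀ x : X, S v x ≤ S w x)
    (hconst : ∀ v : X → ℝ, (∀ x y : X, v x - v y ≤ d x y) →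
      ∀ (c : ℝ) (x : X), S (fun y => v y + c) x = S v x + c)
    (v : X → ℝ) (hv : ∀ x y : X, v x - v y ≤ d x y)
    (lam : ℝ) (hsub : ∀ x : X, lam + v x ≤ S v x) :
    ∀ L : ℝ,
      Filter.Tendsto (fun k : ℕ => (S^[k] (fun x => d x x₀)) x₀ / (k : ℝ))
        Filter.atTop (nhds L) → lam ≤ L := by
  intro L hL
  -- iterates of v are Lipschitz and grow at least linearly
  have key : ∀ k : ℕ, (∀ x y : X, (S^[k] v) x - (S^[k] v) y ≤ d x y) ∧
      (∀ x : X, (k : ℝ) * lam + v x ≤ (S^[k] v) x) := by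
    intro k
    induction k with
    | zero => simp [hv]
    | succ n ih =>
      obtain ⟨hlipn, hgrow⟩ := ih
      have hlipn1 : ∀ x y : X, (S^[n+1] v) x - (S^[n+1] v) y ≤ d x y := by
        intro x y
        rw [Function.iterate_succ_apply']
        exact hlip _ hlipn x y
      refine ⟨hlipn1, ?_⟩
      intro x
      rw [Function.iterate_succ_apply']
      -- S^[n] v ≥ n lam + v pointwise, so S (S^[n] v) ≥ S (n lam + v) = S v + n lam ≥ lam + v + n lam
      have hvshift : ∀ x y : X, (fun y => v y + (n : ℝ) * lam) x -
          (fun y => v y + (n : ℝ) * lam) y ≤ d x y := by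
        intro x y; simpa using hv x y
      have h1 : S (fun y => v y + (n : ℝ) * lam) x ≤ S (S^[n] v) x := by
        apply hmono _ _ hvshift hlipn
        intro z
        have := hgrow z
        linarith
      have h2 : S (fun y => v y + (n : ℝ) * lam) x = S v x + (n : ℝ) * lam :=
        hconst v hv _ x
      have h3 := hsub x
      push_cast
      linarith
  -- iterate commutes with constants
  have iterconst : ∀ (k : ℕ) (c : ℝ) (x : X),
      (S^[k] (fun y => v y + c)) x = (S^[k] v) x + c := by
    intro k c
    induction k with
    | zero => intro x; simp
    | succ n ih =>
      intro x
      rw [Function.iterate_succ_apply', Function.iterate_succ_apply']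
      have hfx : S^[n] (fun y => v y + c) = fun y => (S^[n] v) y + c := funext ih
      rw [hfx]
      exact hconst _ (key n).1 c x
  -- d(·,x₀) dominates v - v x₀
  have hdlip : ∀ x y : X, d x x₀ - d y x₀ ≤ d x y := by
    intro x y
    have := htri x y x₀
    linarith
  have hdliter : ∀ (k : ℕ) (x y : X),
      (S^[k] (fun x => d x x₀)) x - (S^[k] (fun x => d x x₀)) y ≤ d x y := by
    intro k
    induction k with
    | zero => intro x y; simpa using hdlip x y
    | succ n ih =>
      intro x y
      rw [Function.iterate_succ_apply']
      exact hlip _ ih x y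
  have hdom : ∀ k : ℕ, (k : ℝ) * lam ≤ (S^[k] (fun x => d x x₀)) x₀ := by
    intro k
    have hmon : ∀ x : X, (S^[k] (fun y => v y + (-(v x₀)))) x ≤ (S^[k] (fun x => d x x₀)) x := by
      induction k with
      | zero =>
        intro x
        simp only [Function.iterate_zero_apply]
        have := hv x x₀; linarith
      | succ n ih =>
        intro x
        rw [Function.iterate_succ_apply', Function.iterate_succ_apply']
        apply hmono
        · intro a b
          rw [iterconst, iterconst]
          have := (key n).1 a b; linarith
        · exact hdliter n
        · exact ih
    have := hmon x₀
    rw [iterconst] at this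
    have := (key k).2 x₀
    linarith
  -- conclude via the limit
  have hev : ∀ᶠ k : ℕ in Filter.atTop, lam ≤ (S^[k] (fun x => d x x₀)) x₀ / (k : ℝ) := by
    filter_upwards [Filter.eventually_ge_atTop 1] with k hk
    have hkpos : (0 : ℝ) < (k : ℝ) := by exact_mod_cast hk
    rw [le_div_iff₀ hkpos, mul_comm]
    exact hdom k
  exact ge_of_tendsto hL hev
end

section
/- Let S be an order-preserving self-map of a function space that commutes with addition of constants, let λ ∈ ℝ, w a function, and k ≥ 1 such that S^k w ≤ kλ + w. Define θ = min(w, Sw − λ, …, S^{k−1}w − (k−1)λ) (pointwise infimum). Then Sθ ≤ λ + θ pointwise. -/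
/-- If `S` is order preserving and commutes with constants, `S^k w ≤ kλ + w`,
and `θ = min (w, Sw − λ, …, S^{k−1}w − (k−1)λ)`, then `Sθ ≤ λ + θ`. -/
theorem inf_averaging_subeigenvector {X : Type*} (S : (X → ℝ) → (X → ℝ))
    (hmono : ∀ u v : X → ℝ, (∀ x : X, u x ≤ v x) → ∀ x : X, S u x ≤ S v x)
    (hconst : ∀ (v : X → ℝ) (c : ℝ) (x : X), S (fun y => v y + c) x = S v x + c)
    (w : X → ℝ) (lam : ℝ) (k : ℕ) (hk : 1 ≤ k)
    (hw : ∀ x : X, S^[k] w x ≤ (k : ℝ) * lam + w x)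
    (θ : X → ℝ)
    (hθ : ∀ x : X, θ x = ⨅ j : Fin k, (S^[(j : ℕ)] w x - ((j : ℕ) : ℝ) * lam)) :
    ∀ x : X, S θ x ≤ lam + θ x := by
  have hne : Nonempty (Fin k) := ⟨⟨0, hk⟩⟩
  have hθle : ∀ (j : ℕ), j < k → ∀ x, θ x ≤ S^[j] w x - (j : ℝ) * lam := by
    intro j hj x
    rw [hθ x]
    exact ciInf_le (Set.Finite.bddBelow (Set.finite_range _)) (⟨j, hj⟩ : Fin k)
  have key : ∀ (j : ℕ), j < k → ∀ x, S θ x ≤ S^[j+1] w x - (j : ℝ) * lam := by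
    intro j hj x
    calc S θ x ≤ S (fun y => S^[j] w y + (-((j : ℝ) * lam))) x := by
          refine hmono _ _ (fun y => ?_) x
          have := hθle j hj y
          linarith
      _ = S (S^[j] w) x + (-((j : ℝ) * lam)) := hconst _ _ x
      _ = S^[j+1] w x - (j : ℝ) * lam := by
          rw [Function.iterate_succ_apply']; ring
  intro x
  rw [hθ x]
  have h2 : S θ x - lam ≤ ⨅ j : Fin k, (S^[(j : ℕ)] w x - ((j : ℕ) : ℝ) * lam) := by
    refine le_ciInf (fun j => ?_)
    obtain ⟨jv, hjv⟩ := j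
    cases jv with
    | zero =>
        have h3 := key (k - 1) (Nat.sub_lt hk Nat.one_pos) x
        have hk1 : k - 1 + 1 = k := Nat.succ_pred_eq_of_pos hk
        rw [hk1] at h3
        have hc : ((k - 1 : ℕ) : ℝ) = (k : ℝ) - 1 := by
          push_cast [Nat.cast_sub hk]; ring
        rw [hc] at h3
        have h4 := hw x
        simp only [Function.iterate_zero_apply, Nat.cast_zero]
        nlinarith
    | succ i =>
        have h3 := key i (lt_of_le_of_lt (Nat.le_succ i) hjv) x
        push_cast
        linarith
  linarith
end

section
/- Let S be an order-preserving self-map of a function space that commutes with addition of constants, let λ ∈ ℝ, w a function, and k ≥ 1 such that on a subset C, S^{k}w ≥ kλ + w. Define θ = max(w, Sw − λ, …, S^{k−1}w − (k−1)λ). Then for every x ∈ C, Sθ(x) ≥ λ + θ(x). -/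
/-- If `S` is order preserving and commutes with constants, and on a subset
`C` one has `S^k w ≥ kλ + w`, then `θ = max (w, Sw − λ, …, S^{k−1}w − (k−1)λ)` satisfies
`Sθ ≥ λ + θ` on `C`. -/
theorem sup_averaging_supereigenvector {X : Type*} (S : (X → ℝ) → (X → ℝ))
    (hmono : ∀ u v : X → ℝ, (∀ x : X, u x ≤ v x) → ∀ x : X, S u x ≤ S v x)
    (hconst : ∀ (v : X → ℝ) (c : ℝ) (x : X), S (fun y => v y + c) x = S v x + c)
    (C : Set X) (w : X → ℝ) (lam : ℝ) (k : ℕ) (hk : 1 ≤ k)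
    (hw : ∀ x ∈ C, (k : ℝ) * lam + w x ≤ S^[k] w x)
    (θ : X → ℝ)
    (hθ : ∀ x : X, θ x = ⨆ j : Fin k, (S^[(j : ℕ)] w x - ((j : ℕ) : ℝ) * lam)) :
    ∀ x ∈ C, lam + θ x ≤ S θ x := by
  haveI : Nonempty (Fin k) := ⟨⟨0, hk⟩⟩
  -- each term is below θ
  have hterm : ∀ (j : Fin k) (y : X), S^[(j : ℕ)] w y - ((j : ℕ) : ℝ) * lam ≤ θ y := by
    intro j y
    rw [hθ y]
    exact le_ciSup (f := fun j : Fin k => S^[(j : ℕ)] w y - ((j : ℕ) : ℝ) * lam)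
      (Set.Finite.bddAbove (Set.finite_range _)) j
  -- key: for j < k, S(S^[j]w) x − jλ ≤ Sθ x
  have hkey : ∀ (j : Fin k) (x : X),
      S (S^[(j : ℕ)] w) x - ((j : ℕ) : ℝ) * lam ≤ S θ x := by
    intro j x
    have h1 : ∀ y : X, S^[(j : ℕ)] w y + (-(((j : ℕ) : ℝ) * lam)) ≤ θ y := by
      intro y
      have := hterm j y
      linarith
    have h2 := hmono _ _ h1 x
    rw [hconst] at h2
    linarith
  intro x hx
  rw [hθ x]
  rw [← le_sub_iff_add_le']
  apply ciSup_le
  intro i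
  rcases Nat.eq_zero_or_pos (i : ℕ) with h0 | hpos
  · -- i = 0 case: use hw and j = k-1
    have hklt : k - 1 < k := Nat.sub_lt (by omega) one_pos
    have h := hkey ⟨k - 1, hklt⟩ x
    simp only at h
    have hiter2 : S (S^[k - 1] w) x = S^[k] w x := by
      conv_rhs => rw [show k = (k-1) + 1 from by omega]
      rw [Function.iterate_succ_apply']
    rw [hiter2] at h
    have hcast : ((k - 1 : ℕ) : ℝ) = (k : ℝ) - 1 := by
      have : (1:ℕ) ≤ k := hk
      push_cast [this]
      ring
    rw [hcast] at h
    have hw' := hw x hx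
    rw [h0]
    simp only [Function.iterate_zero_apply, Nat.cast_zero, zero_mul, sub_zero]
    have hexp : ((k : ℝ) - 1) * lam = (k : ℝ) * lam - lam := by ring
    linarith
  · -- i ≥ 1: use j = i - 1
    have hjlt : (i : ℕ) - 1 < k := by omega
    have h := hkey ⟨(i : ℕ) - 1, hjlt⟩ x
    simp only at h
    have hiter : S (S^[(i : ℕ) - 1] w) x = S^[(i : ℕ)] w x := by
      conv_rhs => rw [show (i : ℕ) = ((i : ℕ) - 1) + 1 from by omega]
      rw [Function.iterate_succ_apply']
    rw [hiter] at h
    have hcast : (((i : ℕ) - 1 : ℕ) : ℝ) = ((i : ℕ) : ℝ) - 1 := by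
      push_cast [hpos]
      ring
    rw [hcast] at h
    linarith
end

section
/- Let C ⊂ ℝⁿ be a proper cone, e* a point in the interior of the dual cone C*, x₀ ∈ int C. Then there exists β ∈ ℝ such that for all x ∈ C ∖ {0}: −β + log⟨x, e*⟩ ≤ Funk(x, x₀) ≤ β + log⟨x, e*⟩. -/
/-- For a proper cone `C ⊂ ℝⁿ`, `e*` in the interior of the dual cone
(i.e. pairing positively with every nonzero element of `C`) and `x₀ ∈ int C`, there is
`β ∈ ℝ` such that `−β + log⟨x,e*⟩ ≤ Funk(x,x₀) ≤ β + log⟨x,e*⟩` for all `x ∈ C ∖ {0}`. -/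
theorem funk_comparable_to_log_pairing {n : ℕ} (C : Set (Fin n → ℝ))
    (hclosed : IsClosed C) (hconv : Convex ℝ C)
    (hcone : ∀ x ∈ C, ∀ t : ℝ, 0 ≤ t → t • x ∈ C)
    (hpointed : ∀ x : Fin n → ℝ, x ∈ C → -x ∈ C → x = 0)
    (hint : (interior C).Nonempty)
    (es : Fin n → ℝ)
    (hes : ∀ x ∈ C, x ≠ 0 → 0 < ∑ i, x i * es i)
    (x₀ : Fin n → ℝ) (hx₀ : x₀ ∈ interior C) :
    ∃ β : ℝ, ∀ x ∈ C, x ≠ 0 →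
      -β + Real.log (∑ i, x i * es i) ≤ funkMetric C x x₀ ∧
      funkMetric C x x₀ ≤ β + Real.log (∑ i, x i * es i) := by
  by_cases hne : ∃ x ∈ C, x ≠ 0
  swap
  · exact ⟨0, fun x hx hx0 => absurd ⟨x, hx, hx0⟩ hne⟩
  obtain ⟨z, hzC, hz0⟩ := hne
  set p : (Fin n → ℝ) → ℝ := fun x => ∑ i, x i * es i with hp
  have hpsub : ∀ (a : ℝ) (u v : Fin n → ℝ), p (a • u - v) = a * p u - p v := by
    intro a u v
    simp only [hp, Pi.sub_apply, Pi.smul_apply, smul_eq_mul, sub_mul,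
      Finset.sum_sub_distrib, Finset.mul_sum, mul_assoc]
  have hpsmul : ∀ (a : ℝ) (u : Fin n → ℝ), p (a • u) = a * p u := by
    intro a u
    simp only [hp, Pi.smul_apply, smul_eq_mul, Finset.mul_sum, mul_assoc]
  obtain ⟨ε, hε, hball⟩ := Metric.mem_nhds_iff.mp (mem_interior_iff_mem_nhds.mp hx₀)
  have hx₀C : x₀ ∈ C := interior_subset hx₀
  have hx₀0 : x₀ ≠ 0 := by
    intro h
    subst h
    have hz' : (0:ℝ) < ‖z‖ := norm_pos_iff.mpr hz0
    set y := (ε / (2 * ‖z‖)) • z with hy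
    have hyn : ‖y‖ = ε / 2 := by
      rw [hy, norm_smul, Real.norm_eq_abs, abs_of_pos (by positivity)]
      field_simp
    have hymem : y ∈ C := hball (by
      rw [Metric.mem_ball, dist_zero_right, hyn]; linarith)
    have hymem' : -y ∈ C := hball (by
      rw [Metric.mem_ball, dist_zero_right, norm_neg, hyn]; linarith)
    have hy0 := hpointed y hymem hymem'
    rw [hy, smul_eq_zero] at hy0
    rcases hy0 with h | h
    · have : (0:ℝ) < ε / (2 * ‖z‖) := by positivity
      linarith [this.ne' h]
    · exact hz0 h
  have hpx₀ : 0 < p x₀ := hes x₀ hx₀C hx₀0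
  -- compact cross-section and a lower bound c for p on it
  have hK : IsCompact (C ∩ Metric.sphere 0 1) := (isCompact_sphere 0 1).inter_left hclosed
  have hKmem : ∀ x ∈ C, x ≠ 0 → ‖x‖⁻¹ • x ∈ C ∩ Metric.sphere 0 1 := by
    intro x hx hx0
    have hxn : (0:ℝ) < ‖x‖ := norm_pos_iff.mpr hx0
    refine ⟨hcone x hx _ (by positivity), ?_⟩
    simp [mem_sphere_iff_norm, norm_smul, abs_of_pos (show (0:ℝ) < ‖x‖⁻¹ by positivity),
      inv_mul_cancel₀ hxn.ne']
  have hKne : (C ∩ Metric.sphere 0 1).Nonempty := ⟨_, hKmem z hzC hz0⟩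
  have hpc : Continuous p := by
    apply continuous_finset_sum
    intro i _
    exact (continuous_apply i).mul continuous_const
  obtain ⟨w, hwK, hwmin⟩ := hK.exists_isMinOn hKne hpc.continuousOn
  set c := p w with hc
  have hw0 : w ≠ 0 := by
    intro h
    have := hwK.2
    rw [h, mem_sphere_iff_norm] at this
    simp at this
  have hc0 : 0 < c := hes w hwK.1 hw0
  -- the constant β
  refine ⟨|Real.log (p x₀)| + |Real.log (2 / (c * ε))|, ?_⟩
  intro x hxC hx0
  have hpx : 0 < p x := hes x hxC hx0
  have hxn : (0:ℝ) < ‖x‖ := norm_pos_iff.mpr hx0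
  set S := {α : ℝ | 0 < α ∧ α • x₀ - x ∈ C} with hS
  set α₀ := 2 * ‖x‖ / ε with hα₀
  have hα₀pos : 0 < α₀ := by positivity
  have hmemS : α₀ ∈ S := by
    refine ⟨hα₀pos, ?_⟩
    have h1 : x₀ - α₀⁻¹ • x ∈ Metric.ball x₀ ε := by
      rw [Metric.mem_ball, dist_eq_norm]
      have heq : x₀ - α₀⁻¹ • x - x₀ = -(α₀⁻¹ • x) := by abel
      rw [heq, norm_neg, norm_smul, Real.norm_eq_abs, abs_of_pos (by positivity), hα₀]
      have : (2 * ‖x‖ / ε)⁻¹ * ‖x‖ = ε / 2 := by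
        field_simp
      rw [this]; linarith
    have h2 : α₀ • (x₀ - α₀⁻¹ • x) ∈ C := hcone _ (hball h1) α₀ hα₀pos.le
    have h3 : α₀ • (x₀ - α₀⁻¹ • x) = α₀ • x₀ - x := by
      rw [smul_sub, smul_smul, mul_inv_cancel₀ hα₀pos.ne', one_smul]
    rwa [h3] at h2
  have hSne : S.Nonempty := ⟨α₀, hmemS⟩
  have hlb : ∀ α ∈ S, p x / p x₀ ≤ α := by
    intro α hα
    obtain ⟨hαpos, hαmem⟩ := hα
    have hge : 0 ≤ p (α • x₀ - x) := by
      by_cases h : α • x₀ - x = 0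
      · rw [h]; simp [hp]
      · exact (hes _ hαmem h).le
    rw [hpsub] at hge
    rw [div_le_iff₀ hpx₀]
    linarith
  have hbdd : BddBelow S := ⟨p x / p x₀, hlb⟩
  have hlow : p x / p x₀ ≤ sInf S := le_csInf hSne hlb
  have hsInfpos : 0 < sInf S := lt_of_lt_of_le (by positivity) hlow
  have hup : sInf S ≤ α₀ := csInf_le hbdd hmemS
  have hfm : funkMetric C x x₀ = Real.log (sInf S) := rfl
  -- comparing ‖x‖ with p x via c
  have hcx : c * ‖x‖ ≤ p x := by
    have h1 : p w ≤ p (‖x‖⁻¹ • x) := hwmin (hKmem x hxC hx0)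
    rw [hpsmul] at h1
    have this := h1
    have h2 : c * ‖x‖ ≤ (‖x‖⁻¹ * p x) * ‖x‖ := by
      exact mul_le_mul_of_nonneg_right this hxn.le
    rw [inv_mul_eq_div, div_mul_eq_mul_div, mul_div_assoc, div_self hxn.ne', mul_one] at h2
    linarith
  constructor
  · -- lower bound
    have h1 : Real.log (p x / p x₀) ≤ Real.log (sInf S) :=
      Real.log_le_log (by positivity) hlow
    rw [Real.log_div hpx.ne' hpx₀.ne'] at h1
    rw [hfm]
    have := le_abs_self (Real.log (p x₀))
    have := abs_nonneg (Real.log (2 / (c * ε)))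
    linarith
  · -- upper bound
    have hα₀le : α₀ ≤ 2 / (c * ε) * p x := by
      rw [hα₀]
      rw [div_le_iff₀ hε] at *
      have : 2 * ‖x‖ ≤ 2 / c * p x := by
        rw [div_mul_eq_mul_div, le_div_iff₀ hc0]
        calc 2 * ‖x‖ * c = 2 * (c * ‖x‖) := by ring
          _ ≤ 2 * p x := by linarith
          _ = 2 * p x := rfl
      calc 2 * ‖x‖ ≤ 2 / c * p x := this
        _ = 2 / (c * ε) * p x * ε := by field_simp
    have h1 : Real.log (sInf S) ≤ Real.log (2 / (c * ε) * p x) :=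
      Real.log_le_log hsInfpos (le_trans hup hα₀le)
    rw [Real.log_mul (by positivity) hpx.ne'] at h1
    rw [hfm]
    have := le_abs_self (Real.log (2 / (c * ε)))
    have := abs_nonneg (Real.log (p x₀))
    linarith
end

section
/- Let A, B ⊂ ℝⁿ be nonempty compact sets, and ‖·‖ a norm on ℝⁿ. Then max_{b∈B} min_{a∈conv(A)} ‖a+b‖ = max over linear functionals ℓ with dual norm ≤ 1 of (max_{b∈B} ℓ(b) + min_{a∈A} ℓ(a)). -/
open Set Metric

/-- For nonempty compact `A, B ⊂ ℝⁿ` (a finite-dimensional real normed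
space) one has
`max_{b∈B} min_{a∈conv A} ‖a+b‖ = max_{‖ℓ‖* ≤ 1} (max_{b∈B} ℓ(b) + min_{a∈A} ℓ(a))`. -/
theorem vector_addition_game_value {E : Type*} [NormedAddCommGroup E] [NormedSpace ℝ E]
    [FiniteDimensional ℝ E]
    (A B : Set E) (hA : IsCompact A) (hAne : A.Nonempty)
    (hB : IsCompact B) (hBne : B.Nonempty) :
    sSup ((fun b => sInf ((fun a => ‖a + b‖) '' convexHull ℝ A)) '' B) =
      sSup ((fun ℓ : E →L[ℝ] ℝ => sSup ((fun b => ℓ b) '' B) + sInf ((fun a => ℓ a) '' A)) ''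
        {ℓ : E →L[ℝ] ℝ | ‖ℓ‖ ≤ 1}) := by
  obtain ⟨a₀, ha₀⟩ := hAne
  set K := convexHull ℝ A with hKdef
  have hAK : A ⊆ K := subset_convexHull ℝ A
  have hKne : K.Nonempty := ⟨a₀, hAK ha₀⟩
  have hKconv : Convex ℝ K := convex_convexHull ℝ A
  -- the linear functional's inf over A bounds it on the hull
  have hinf_lin : ∀ (ℓ : E →L[ℝ] ℝ), ∀ a ∈ K, sInf ((fun a => ℓ a) '' A) ≤ ℓ a := by
    intro ℓ
    have hbdd : BddBelow ((fun a => ℓ a) '' A) := (hA.image ℓ.continuous).bddBelow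
    have hsub : K ⊆ ℓ ⁻¹' (Ici (sInf ((fun a => ℓ a) '' A))) := by
      rw [hKdef]
      apply convexHull_min
      · intro a ha
        exact csInf_le hbdd ⟨a, ha, rfl⟩
      · exact (convex_Ici _).linear_preimage (ℓ : E →ₗ[ℝ] ℝ)
    intro a ha
    exact hsub ha
  -- bound on norms over B
  have hBn : BddAbove ((fun b => ‖b‖) '' B) := (hB.image continuous_norm).bddAbove
  set MB := sSup ((fun b => ‖b‖) '' B) with hMB
  have hMBle : ∀ b ∈ B, ‖b‖ ≤ MB := fun b hb => le_csSup hBn ⟨b, hb, rfl⟩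
  -- nonemptiness and boundedness of the inner norm-inf sets
  have hNne : ∀ b : E, ((fun a => ‖a + b‖) '' K).Nonempty := fun b => hKne.image _
  have hNbdd : ∀ b : E, BddBelow ((fun a => ‖a + b‖) '' K) := by
    intro b
    exact ⟨0, by rintro y ⟨a, ha, rfl⟩; exact norm_nonneg _⟩
  -- LHS set bounded above
  have hS1bdd : BddAbove ((fun b => sInf ((fun a => ‖a + b‖) '' K)) '' B) := by
    refine ⟨‖a₀‖ + MB, ?_⟩
    rintro y ⟨b, hb, rfl⟩
    calc sInf ((fun a => ‖a + b‖) '' K) ≤ ‖a₀ + b‖ := csInf_le (hNbdd b) ⟨a₀, hAK ha₀, rfl⟩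
      _ ≤ ‖a₀‖ + ‖b‖ := norm_add_le _ _
      _ ≤ ‖a₀‖ + MB := by linarith [hMBle b hb]
  -- RHS set bounded above
  have hS2bdd : BddAbove ((fun ℓ : E →L[ℝ] ℝ =>
      sSup ((fun b => ℓ b) '' B) + sInf ((fun a => ℓ a) '' A)) '' {ℓ : E →L[ℝ] ℝ | ‖ℓ‖ ≤ 1}) := by
    refine ⟨MB + ‖a₀‖, ?_⟩
    rintro y ⟨ℓ, hℓ, rfl⟩
    have hℓ1 : ‖ℓ‖ ≤ 1 := hℓ
    dsimp only
    have h1 : sSup ((fun b => ℓ b) '' B) ≤ MB := by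
      apply csSup_le (hBne.image _)
      rintro y ⟨b, hb, rfl⟩
      calc ℓ b ≤ |ℓ b| := le_abs_self _
        _ ≤ ‖ℓ‖ * ‖b‖ := ℓ.le_opNorm b
        _ ≤ 1 * ‖b‖ := mul_le_mul_of_nonneg_right hℓ1 (norm_nonneg _)
        _ = ‖b‖ := one_mul _
        _ ≤ MB := hMBle b hb
    have h2 : sInf ((fun a => ℓ a) '' A) ≤ ‖a₀‖ := by
      calc sInf ((fun a => ℓ a) '' A) ≤ ℓ a₀ :=
            csInf_le (hA.image ℓ.continuous).bddBelow ⟨a₀, ha₀, rfl⟩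
        _ ≤ |ℓ a₀| := le_abs_self _
        _ ≤ ‖ℓ‖ * ‖a₀‖ := ℓ.le_opNorm a₀
        _ ≤ 1 * ‖a₀‖ := mul_le_mul_of_nonneg_right hℓ1 (norm_nonneg _)
        _ = ‖a₀‖ := one_mul _
    linarith
  apply le_antisymm
  · -- hard direction: LHS ≤ RHS
    apply csSup_le (hBne.image _)
    rintro y ⟨b, hb, rfl⟩
    set d := sInf ((fun a => ‖a + b‖) '' K) with hd
    have hd0 : 0 ≤ d := le_csInf (hNne b) (by rintro y ⟨a, ha, rfl⟩; exact norm_nonneg _)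
    -- produce a functional ℓ with ‖ℓ‖ ≤ 1 and d ≤ ℓ b + sInf (ℓ '' A)
    have key : ∃ ℓ : E →L[ℝ] ℝ, ‖ℓ‖ ≤ 1 ∧ d ≤ ℓ b + sInf ((fun a => ℓ a) '' A) := by
      rcases eq_or_lt_of_le hd0 with h0 | hdpos
      · refine ⟨0, by simp, ?_⟩
        have : (fun a => (0 : E →L[ℝ] ℝ) a) '' A = {0} := by
          simpa using Set.Nonempty.image_const (⟨a₀, ha₀⟩ : A.Nonempty) (0 : ℝ)
        rw [this]
        simp [← h0]
      · -- separate ball 0 d from K + b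
        have hdisj : Disjoint (ball (0 : E) d) ((fun a => a + b) '' K) := by
          rw [Set.disjoint_left]
          rintro z hz ⟨a, ha, rfl⟩
          have h1 : ‖a + b‖ < d := by simpa using hz
          have h2 : d ≤ ‖a + b‖ := csInf_le (hNbdd b) ⟨a, ha, rfl⟩
          linarith
        have htconv : Convex ℝ ((fun a => a + b) '' K) := by
          simpa [add_comm] using hKconv.translate b
        obtain ⟨f, u, hf1, hf2⟩ :=
          geometric_hahn_banach_open (convex_ball (0 : E) d) isOpen_ball htconv hdisj
        have hu0 : 0 < u := by
          have := hf1 0 (mem_ball_self hdpos)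
          simpa using this
        -- f ≤ u on the closed ball of radius d
        have hcb : ∀ x : E, ‖x‖ ≤ d → f x ≤ u := by
          have hsub : closedBall (0 : E) d ⊆ {x | f x ≤ u} := by
            rw [← closure_ball (0 : E) (ne_of_gt hdpos)]
            exact closure_minimal (fun x hx => (hf1 x hx).le)
              (isClosed_le f.continuous continuous_const)
          intro x hx
          exact hsub (by simpa [mem_closedBall, dist_eq_norm] using hx)
        -- multiplicative bound
        have hmul : ∀ x : E, d * f x ≤ u * ‖x‖ := by
          intro x
          rcases eq_or_ne x 0 with rfl | hx
          · simp
          · have hxn : 0 < ‖x‖ := norm_pos_iff.mpr hx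
            have h1 : f ((d / ‖x‖) • x) ≤ u := by
              apply hcb
              rw [norm_smul (d / ‖x‖) x, Real.norm_eq_abs, abs_of_nonneg (by positivity)]
              rw [div_mul_cancel₀]
              exact ne_of_gt hxn
            rw [map_smul, smul_eq_mul] at h1
            rw [div_mul_eq_mul_div] at h1
            have := (div_le_iff₀ hxn).mp h1
            linarith
        have hfn : ‖f‖ ≤ u / d := by
          apply f.opNorm_le_bound (by positivity)
          have key : ∀ y : E, f y ≤ u / d * ‖y‖ := by
            intro y
            rw [div_mul_eq_mul_div, le_div_iff₀ hdpos]
            linarith [hmul y]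
          intro x
          rw [Real.norm_eq_abs, abs_le]
          constructor
          · have := key (-x)
            rw [map_neg, norm_neg] at this
            linarith
          · exact key x
        have hfne : f ≠ 0 := by
          intro hf0
          have := hf2 (a₀ + b) ⟨a₀, hAK ha₀, rfl⟩
          rw [hf0] at this
          simp at this
          linarith
        have hfpos : 0 < ‖f‖ := norm_pos_iff.mpr hfne
        have hdu : d * ‖f‖ ≤ u := by
          have := (le_div_iff₀ hdpos).mp hfn
          linarith
        refine ⟨‖f‖⁻¹ • f, ?_, ?_⟩
        · have : ‖(‖f‖⁻¹ • f : E →L[ℝ] ℝ)‖ = ‖f‖⁻¹ * ‖f‖ := by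
            rw [norm_smul ‖f‖⁻¹ f, Real.norm_eq_abs, abs_of_nonneg (by positivity)]
          rw [this, inv_mul_cancel₀ (ne_of_gt hfpos)]
        · have hkey : ∀ a ∈ A, d ≤ (‖f‖⁻¹ • f) b + (‖f‖⁻¹ • f) a := by
            intro a ha
            have h1 : u ≤ f (a + b) := hf2 (a + b) ⟨a, hAK ha, rfl⟩
            have h2 : (‖f‖⁻¹ • f) b + (‖f‖⁻¹ • f) a = ‖f‖⁻¹ * f (a + b) := by
              simp only [ContinuousLinearMap.smul_apply, smul_eq_mul, map_add]
              ring
            rw [h2]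
            have h3 : ‖f‖⁻¹ * u ≤ ‖f‖⁻¹ * f (a + b) :=
              mul_le_mul_of_nonneg_left h1 (by positivity)
            have h4 : d = ‖f‖⁻¹ * (d * ‖f‖) := by field_simp
            have h5 : ‖f‖⁻¹ * (d * ‖f‖) ≤ ‖f‖⁻¹ * u :=
              mul_le_mul_of_nonneg_left hdu (by positivity)
            linarith
          have : d - (‖f‖⁻¹ • f) b ≤ sInf ((fun a => (‖f‖⁻¹ • f) a) '' A) := by
            apply le_csInf (Set.Nonempty.image _ (⟨a₀, ha₀⟩ : A.Nonempty))
            rintro y ⟨a, ha, rfl⟩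
            linarith [hkey a ha]
          linarith
    obtain ⟨ℓ, hℓ1, hℓ2⟩ := key
    have h1 : ℓ b ≤ sSup ((fun b => ℓ b) '' B) :=
      le_csSup (hB.image ℓ.continuous).bddAbove ⟨b, hb, rfl⟩
    calc d ≤ ℓ b + sInf ((fun a => ℓ a) '' A) := hℓ2
      _ ≤ sSup ((fun b => ℓ b) '' B) + sInf ((fun a => ℓ a) '' A) := by linarith
      _ ≤ _ := le_csSup hS2bdd ⟨ℓ, hℓ1, rfl⟩
  · -- easy direction: RHS ≤ LHS
    apply csSup_le ⟨_, Set.mem_image_of_mem _ (show (0 : E →L[ℝ] ℝ) ∈ {ℓ : E →L[ℝ] ℝ | ‖ℓ‖ ≤ 1} by simp)⟩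
    rintro y ⟨ℓ, hℓ, rfl⟩
    have hℓ1 : ‖ℓ‖ ≤ 1 := hℓ
    dsimp only
    -- the sup of ℓ over B is attained
    have hmem : sSup ((fun b => ℓ b) '' B) ∈ (fun b => ℓ b) '' B :=
      (hB.image ℓ.continuous).sSup_mem (hBne.image _)
    obtain ⟨b₁, hb₁, hb₁eq⟩ := hmem
    rw [← hb₁eq]
    have h1 : ℓ b₁ + sInf ((fun a => ℓ a) '' A) ≤ sInf ((fun a => ‖a + b₁‖) '' K) := by
      apply le_csInf (hNne b₁)
      rintro y ⟨a, ha, rfl⟩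
      have h2 : sInf ((fun a => ℓ a) '' A) ≤ ℓ a := hinf_lin ℓ a ha
      have h3 : ℓ (a + b₁) ≤ ‖a + b₁‖ := by
        calc ℓ (a + b₁) ≤ |ℓ (a + b₁)| := le_abs_self _
          _ ≤ ‖ℓ‖ * ‖a + b₁‖ := ℓ.le_opNorm _
          _ ≤ 1 * ‖a + b₁‖ := mul_le_mul_of_nonneg_right hℓ1 (norm_nonneg _)
          _ = ‖a + b₁‖ := one_mul _
      rw [map_add] at h3
      linarith
    calc ℓ b₁ + sInf ((fun a => ℓ a) '' A) ≤ sInf ((fun a => ‖a + b₁‖) '' K) := h1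
      _ ≤ _ := le_csSup hS1bdd ⟨b₁, hb₁, rfl⟩
end

section
/- Let A ⊂ ℝⁿ be a nonempty compact set. Then (n+1)·conv(A) ⊆ n·conv(A) + A, where k·S denotes the Minkowski sum of k copies of S. -/
open Pointwise

/-- Shapley–Folkman consequence: For a nonempty compact `A ⊂ ℝⁿ`,
`(n+1)·conv(A) ⊆ n·conv(A) + A`. -/
theorem shapley_folkman_inclusion {n : ℕ} (A : Set (Fin n → ℝ))
    (hA : IsCompact A) (hAne : A.Nonempty) :
    ((n : ℝ) + 1) • convexHull ℝ A ⊆ (n : ℝ) • convexHull ℝ A + A := by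
  classical
  rcases Nat.eq_zero_or_pos n with hn | hn
  · subst hn
    intro x _
    obtain ⟨a, ha⟩ := hAne
    have hx : x = ((0:ℕ):ℝ) • a + a := Subsingleton.elim _ _
    rw [hx]
    exact Set.add_mem_add (Set.smul_mem_smul_set (subset_convexHull ℝ A ha)) ha
  · have hn0 : ((n:ℝ)) ≠ 0 := by positivity
    rintro x ⟨c, hc, rfl⟩
    show ((n:ℝ) + 1) • c ∈ (n:ℝ) • convexHull ℝ A + A
    rw [convexHull_eq_union] at hc
    simp only [Set.mem_iUnion, exists_prop] at hc
    obtain ⟨t, hts, hai, hct⟩ := hc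
    rw [Finset.mem_convexHull'] at hct
    obtain ⟨w, hw0, hw1, hzc⟩ := hct
    have hcard : t.card ≤ n + 1 := by
      have h1 := hai.card_le_finrank_succ
      have h2 : Module.finrank ℝ (vectorSpan ℝ (Set.range ((↑) : t → (Fin n → ℝ)))) ≤ n := by
        simpa [Module.finrank_fin_fun] using
          (vectorSpan ℝ (Set.range ((↑) : t → (Fin n → ℝ)))).finrank_le
      simpa [Fintype.card_coe] using h1.trans (by omega)
    have htne : t.Nonempty := Finset.nonempty_of_sum_ne_zero (by rw [hw1]; norm_num)
    have hsum_le : ∑ _i ∈ t, (1:ℝ)/((n:ℝ)+1) ≤ ∑ i ∈ t, w i := by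
      rw [hw1, Finset.sum_const, nsmul_eq_mul, mul_one_div, div_le_one (by positivity)]
      exact_mod_cast hcard
    obtain ⟨j, hjt, hj⟩ := Finset.exists_le_of_sum_le htne hsum_le
    set w' : (Fin n → ℝ) → ℝ :=
      fun i => (((n:ℝ)+1) * w i - if i = j then 1 else 0) / n with hw'
    have hw'0 : ∀ i ∈ t, 0 ≤ w' i := by
      intro i hi
      apply div_nonneg _ (by positivity)
      by_cases h : i = j
      · subst h
        rw [div_le_iff₀ (by positivity)] at hj
        rw [if_pos rfl]
        nlinarith
      · simp only [if_neg h, sub_zero]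
        exact mul_nonneg (by positivity) (hw0 i hi)
    have hw'1 : ∑ i ∈ t, w' i = 1 := by
      rw [hw']
      rw [← Finset.sum_div, Finset.sum_sub_distrib, ← Finset.mul_sum, hw1,
        Finset.sum_ite_eq' t j (fun _ => (1:ℝ)), if_pos hjt, mul_one]
      field_simp
      ring
    set c' := ∑ i ∈ t, w' i • i with hc'def
    have hc' : c' ∈ convexHull ℝ A := by
      have h := t.centerMass_mem_convexHull (w := w') (z := id)
        hw'0 (by rw [hw'1]; norm_num) (fun i hi => hts hi)
      rwa [Finset.centerMass_eq_of_sum_1 _ _ hw'1] at h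
    have key : (n:ℝ) • c' + j = ((n:ℝ)+1) • c := by
      have h1 : (n:ℝ) • c' =
          ∑ i ∈ t, ((((n:ℝ)+1) * w i) • i - (if i = j then (1:ℝ) else 0) • i) := by
        rw [hc'def, Finset.smul_sum]
        refine Finset.sum_congr rfl fun i _ => ?_
        rw [smul_smul, ← sub_smul]
        congr 1
        rw [hw']
        field_simp
      have h2 : ∑ i ∈ t, (if i = j then (1:ℝ) else 0) • i = j := by
        simp only [ite_smul, one_smul, zero_smul]
        rw [Finset.sum_ite_eq' t j (fun i => i), if_pos hjt]
      have h3 : ∑ i ∈ t, (((n:ℝ)+1) * w i) • i = ((n:ℝ)+1) • c := by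
        rw [← hzc, Finset.smul_sum]
        exact Finset.sum_congr rfl fun i _ => (smul_smul _ _ _).symm
      rw [h1, Finset.sum_sub_distrib, h2, h3]
      abel
    rw [← key]
    exact Set.add_mem_add (Set.smul_mem_smul_set hc') (hts hjt)
end

section
/- Let A, B ⊂ ℝⁿ be nonempty compact sets, ‖·‖ a norm, λ = max_{b∈B} min_{a∈conv(A)} ‖a+b‖, and define φ(x) = dist(x, −(n+1)·conv(A)). Then for every x ∈ ℝⁿ, min_{a∈A} max_{b∈B} φ(x+a+b) ≤ λ + φ(x). -/
open Pointwise

/-- Shapley–Folkman type inclusion for a single set, via Carathéodory. -/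
lemma sf_step {E : Type*} [NormedAddCommGroup E] [NormedSpace ℝ E] [FiniteDimensional ℝ E]
    (n : ℕ) (hdim : Module.finrank ℝ E = n) {A : Set E} {c : E}
    (hc : c ∈ convexHull ℝ A) :
    ∃ a ∈ A, ∃ d ∈ convexHull ℝ A, ((n : ℝ) + 1) • c = a + (n : ℝ) • d := by
  rcases Nat.eq_zero_or_pos n with hn | hn
  · subst hn
    have hsub : Subsingleton E := by
      rw [← Module.finrank_zero_iff (R := ℝ)]; exact hdim
    obtain ⟨a, ha⟩ : A.Nonempty := by
      by_contra h
      rw [Set.not_nonempty_iff_eq_empty] at h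
      simp [h, convexHull_empty] at hc
    exact ⟨a, ha, c, hc, Subsingleton.elim _ _⟩
  obtain ⟨ι, fι, z, w, hzA, hai, hw0, hw1, hwz⟩ :=
    eq_pos_convex_span_of_mem_convexHull hc
  classical
  have hcard : Fintype.card ι ≤ n + 1 := by
    refine le_trans hai.card_le_finrank_succ ?_
    have := Submodule.finrank_le (vectorSpan ℝ (Set.range z))
    omega
  have hne : Nonempty ι := by
    rcases isEmpty_or_nonempty ι with h | h
    · simp at hw1
    · exact h
  -- pick an index with maximal weight
  obtain ⟨i, -, hi⟩ := Finset.exists_max_image (Finset.univ : Finset ι) w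
    Finset.univ_nonempty
  have hwi : 1 ≤ ((n : ℝ) + 1) * w i := by
    have h1 : (1 : ℝ) = ∑ j, w j := hw1.symm
    have h2 : ∑ j, w j ≤ ∑ _j : ι, w i :=
      Finset.sum_le_sum fun j _ => hi j (Finset.mem_univ j)
    have h3 : (∑ _j : ι, w i) = (Fintype.card ι : ℝ) * w i := by
      simp [Finset.sum_const, nsmul_eq_mul]
    have h4 : (Fintype.card ι : ℝ) * w i ≤ ((n : ℝ) + 1) * w i := by
      apply mul_le_mul_of_nonneg_right _ (le_of_lt (hw0 i))
      exact_mod_cast hcard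
    linarith
  set u : ι → ℝ := fun j => ((n : ℝ) + 1) * w j - (if j = i then 1 else 0) with hu
  have hu0 : ∀ j ∈ Finset.univ, 0 ≤ u j := by
    intro j _
    by_cases h : j = i
    · subst h; simp [hu]; linarith
    · simp only [hu, h, if_false, sub_zero]
      exact mul_nonneg (by positivity) (hw0 j).le
  have husum : ∑ j, u j = (n : ℝ) := by
    simp only [hu, Finset.sum_sub_distrib, ← Finset.mul_sum, hw1,
      Finset.sum_ite_eq' Finset.univ i (fun _ => (1:ℝ)), Finset.mem_univ, if_true]
    ring
  have hnpos : (0 : ℝ) < ∑ j, u j := by rw [husum]; exact_mod_cast hn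
  have hd : Finset.univ.centerMass u z ∈ convexHull ℝ A :=
    Finset.centerMass_mem_convexHull _ hu0 hnpos fun j _ => hzA ⟨j, rfl⟩
  refine ⟨z i, hzA ⟨i, rfl⟩, Finset.univ.centerMass u z, hd, ?_⟩
  have hsmul : (n : ℝ) • Finset.univ.centerMass u z = ∑ j, u j • z j := by
    rw [Finset.centerMass, husum, smul_smul]
    rw [mul_inv_cancel₀ (by exact_mod_cast hn.ne')]
    simp
  rw [hsmul]
  have hsum2 : ∑ j, u j • z j = ((n : ℝ) + 1) • c - z i := by
    have h1 : ∑ j, (((n : ℝ) + 1) * w j) • z j = ((n : ℝ) + 1) • c := by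
      simp only [mul_smul]
      rw [← Finset.smul_sum, hwz]
    have h2 : ∑ j, (if j = i then (1 : ℝ) else 0) • z j = z i := by
      simp [ite_smul]
    simp only [hu, sub_smul, Finset.sum_sub_distrib, h1, h2]
  rw [hsum2]
  abel

/-- Let `A, B` be nonempty compact subsets of an `n`-dimensional real normed
space, `λ = max_{b∈B} min_{a∈conv A} ‖a+b‖` and `φ(x) = dist(x, −(n+1)·conv(A))`. Then
for every `x`, `min_{a∈A} max_{b∈B} φ(x+a+b) ≤ λ + φ(x)`. -/
theorem distance_like_subeigenvector_vector_addition {E : Type*}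
    [NormedAddCommGroup E] [NormedSpace ℝ E] [FiniteDimensional ℝ E]
    (n : ℕ) (hdim : Module.finrank ℝ E = n)
    (A B : Set E) (hA : IsCompact A) (hAne : A.Nonempty)
    (hB : IsCompact B) (hBne : B.Nonempty)
    (lam : ℝ)
    (hlam : lam = sSup ((fun b => sInf ((fun a => ‖a + b‖) '' convexHull ℝ A)) '' B))
    (φ : E → ℝ)
    (hφ : ∀ x : E, φ x = Metric.infDist x (-(((n : ℝ) + 1) • convexHull ℝ A))) :
    ∀ x : E, sInf ((fun a => sSup ((fun b => φ (x + a + b)) '' B)) '' A) ≤ lam + φ x := by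
  intro x
  set K := convexHull ℝ A with hK
  have hAK : A ⊆ K := subset_convexHull ℝ A
  have hKne : K.Nonempty := hAne.mono hAK
  set S : Set E := -(((n : ℝ) + 1) • K) with hS
  have hSne : S.Nonempty := by
    obtain ⟨a0, ha0⟩ := hKne
    exact ⟨-(((n : ℝ) + 1) • a0), by
      rw [Set.mem_neg, neg_neg]; exact Set.smul_mem_smul_set ha0⟩
  -- boundedness of B
  obtain ⟨C, hC⟩ : ∃ C, ∀ b ∈ B, ‖b‖ ≤ C :=
    hB.isBounded.exists_norm_le
  obtain ⟨a0, ha0⟩ := hKne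
  -- the inner inf function and its basic bounds
  set f : E → ℝ := fun b => sInf ((fun a => ‖a + b‖) '' K) with hf
  have hbddB : ∀ b, BddBelow ((fun a => ‖a + b‖) '' K) := by
    intro b
    exact ⟨0, by rintro y ⟨a, -, rfl⟩; positivity⟩
  have hfle : ∀ b ∈ B, f b ≤ lam := by
    intro b hb
    rw [hlam]
    refine le_csSup ⟨‖a0‖ + C, ?_⟩ (Set.mem_image_of_mem _ hb)
    rintro y ⟨b', hb', rfl⟩
    refine le_trans (csInf_le (hbddB b') (Set.mem_image_of_mem _ ha0)) ?_
    calc ‖a0 + b'‖ ≤ ‖a0‖ + ‖b'‖ := norm_add_le _ _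
      _ ≤ ‖a0‖ + C := by linarith [hC b' hb']
  -- nonnegativity of φ
  have hφ0 : ∀ y, 0 ≤ φ y := fun y => by rw [hφ]; exact Metric.infDist_nonneg
  -- it suffices to prove the bound up to ε
  refine le_of_forall_pos_le_add ?_
  intro ε hε
  have hε2 : 0 < ε / 2 := by linarith
  -- approximate nearest point to x in S
  obtain ⟨c, hcS, hcd⟩ : ∃ c ∈ S, dist x c < φ x + ε / 2 := by
    have h : Metric.infDist x S < φ x + ε / 2 := by
      rw [hφ x]; linarith
    exact (Metric.infDist_lt_iff hSne).1 h
  -- decompose -c = a + n • d via Shapley–Folkman / Carathéodory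
  obtain ⟨c0, hc0, hc0eq⟩ : ∃ c0 ∈ K, -c = ((n : ℝ) + 1) • c0 := by
    rw [Set.mem_neg] at hcS
    obtain ⟨c0, hc0, hc0eq⟩ := hcS
    exact ⟨c0, hc0, hc0eq.symm⟩
  obtain ⟨a, haA, d, hdK, hsf⟩ := sf_step n hdim hc0
  have hac : a + (n : ℝ) • d = -c := by rw [← hsf, hc0eq]
  -- main estimate for this a and every b ∈ B
  have hmain : ∀ b ∈ B, φ (x + a + b) ≤ lam + φ x + ε := by
    intro b hb
    -- approximate minimizer a* in K of ‖· + b‖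
    obtain ⟨a', ha'K, ha'⟩ : ∃ a' ∈ K, ‖a' + b‖ < f b + ε / 2 := by
      have h1 : f b < f b + ε / 2 := by linarith
      obtain ⟨y, hy, hy2⟩ := exists_lt_of_csInf_lt
        (Set.Nonempty.image _ ⟨a0, ha0⟩) h1
      obtain ⟨a', ha', rfl⟩ := hy
      exact ⟨a', ha', hy2⟩
    -- the comparison point z ∈ S
    set e : E := ((n : ℝ) / ((n : ℝ) + 1)) • d + (1 / ((n : ℝ) + 1)) • a' with he
    have hn1 : (0 : ℝ) < (n : ℝ) + 1 := by positivity
    have heK : e ∈ K := by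
      refine (convex_convexHull ℝ A) hdK ha'K (by positivity) (by positivity) ?_
      field_simp
    have hez : ((n : ℝ) + 1) • e = (n : ℝ) • d + a' := by
      rw [he, smul_add, smul_smul, smul_smul]
      rw [mul_div_cancel₀ _ hn1.ne', mul_one_div, div_self hn1.ne', one_smul]
    have hzS : -(((n : ℝ) + 1) • e) ∈ S := by
      rw [Set.mem_neg, neg_neg]; exact Set.smul_mem_smul_set heK
    have hle : φ (x + a + b) ≤ dist (x + a + b) (-(((n : ℝ) + 1) • e)) := by
      rw [hφ]; exact Metric.infDist_le_dist_of_mem hzS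
    have hdist : dist (x + a + b) (-(((n : ℝ) + 1) • e)) ≤ dist x c + ‖a' + b‖ := by
      rw [dist_eq_norm, dist_eq_norm]
      have hc' : c = -(a + (n : ℝ) • d) := by rw [hac, neg_neg]
      have : x + a + b - -(((n : ℝ) + 1) • e) = (x - c) + (a' + b) := by
        rw [hez, hc']; abel
      rw [this]
      exact norm_add_le _ _
    have : φ (x + a + b) ≤ dist x c + ‖a' + b‖ := le_trans hle hdist
    have hfb : f b ≤ lam := hfle b hb
    linarith
  -- conclude: the sSup over b of φ(x+a+b) is ≤ lam + φ x + ε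
  have hsup : sSup ((fun b => φ (x + a + b)) '' B) ≤ lam + φ x + ε := by
    refine csSup_le (hBne.image _) ?_
    rintro y ⟨b, hb, rfl⟩
    exact hmain b hb
  refine le_trans (le_trans ?_ hsup) le_rfl
  refine csInf_le ⟨0, ?_⟩ (Set.mem_image_of_mem _ haA)
  rintro y ⟨a'', ha'', rfl⟩
  obtain ⟨b0, hb0⟩ := hBne
  refine le_trans (hφ0 (x + a'' + b0)) (le_csSup ?_ (Set.mem_image_of_mem _ hb0))
  -- bddAbove of φ(x+a''+·) image over B
  refine ⟨φ (x + a'') + C, ?_⟩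
  rintro y ⟨b, hb, rfl⟩
  have h1 : φ (x + a'' + b) ≤ φ (x + a'') + dist (x + a'' + b) (x + a'') := by
    rw [hφ, hφ]
    have := Metric.infDist_le_infDist_add_dist
      (x := x + a'' + b) (y := x + a'') (s := -(((n : ℝ) + 1) • convexHull ℝ A))
    linarith [this]
  have h2 : dist (x + a'' + b) (x + a'') = ‖b‖ := by
    rw [dist_eq_norm]; simp
  rw [h2] at h1
  linarith [hC b hb]
end
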